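/- If there exists a nonempty open interval (a,b) ⊂ (1,∞) containing no Salem number, then the set of Salem numbers is bounded away from 1, i.e., there exists c > 1 such that every Salem number θ satisfies θ ≥ c. -/

import Mathlib

open Polynomial IntermediateField

/-- A Salem number: a real algebraic integer `θ > 1` all of whose Galois
conjugates other than `θ` itself have modulus at most `1`, with at least one
conjugate of modulus exactly `1`. -/
def IsSalem (θ : ℝ) : Prop :=
  1 < θ ∧ IsIntegral ℤ θ ∧
    (∀ z : ℂ, aeval z (minpoly ℚ θ) = 0 → z ≠ (θ : ℂ) → ‖z‖ ≤ 1) ∧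
    (∃ z : ℂ, aeval z (minpoly ℚ θ) = 0 ∧ ‖z‖ = 1)

lemma isSalem_pow {θ : ℝ} (hθ : IsSalem θ) {n : ℕ} (hn : 1 ≤ n) : IsSalem (θ ^ n) := by
  obtain ⟨h1, hint, hconj, z₀, hz₀, habs₀⟩ := hθ
  have hQint : IsIntegral ℚ θ := hint.tower_top
  have hK : ∀ s ∈ ({θ} : Set ℝ), IsIntegral ℚ s ∧
      ((minpoly ℚ s).map (algebraMap ℚ ℂ)).Splits := by
    rintro s rfl
    exact ⟨hQint, IsAlgClosed.splits _⟩
  have hmemθ : θ ∈ IntermediateField.adjoin ℚ ({θ} : Set ℝ) :=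
    IntermediateField.mem_adjoin_simple_self ℚ θ
  have hmem : θ ^ n ∈ IntermediateField.adjoin ℚ ({θ} : Set ℝ) := pow_mem hmemθ n
  set gen := IntermediateField.AdjoinSimple.gen ℚ θ with hgen
  have hgenpow : (⟨θ ^ n, hmem⟩ : ℚ⟮θ⟯) = gen ^ n := by
    apply Subtype.ext
    simp [hgen, IntermediateField.AdjoinSimple.gen]
  -- aeval of gen^n at minpoly of θ^n is zero
  have haevalq : aeval (gen ^ n) (minpoly ℚ (θ ^ n)) = 0 := by
    have h1 : aeval ((ℚ⟮θ⟯.val) (gen ^ n)) (minpoly ℚ (θ ^ n)) =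
        (ℚ⟮θ⟯.val) (aeval (gen ^ n) (minpoly ℚ (θ ^ n))) :=
      Polynomial.aeval_algHom_apply _ _ _
    have h2 : (ℚ⟮θ⟯.val) (gen ^ n) = θ ^ n := by
      simp [hgen]
    rw [h2, minpoly.aeval] at h1
    exact Subtype.val_injective h1.symm
  refine ⟨one_lt_pow₀ h1 (by omega), hint.pow n, ?_, ?_⟩
  · intro z hz hzne
    obtain ⟨φ, hφ⟩ :=
      IntermediateField.exists_algHom_adjoin_of_splits_of_aeval hK hmem hz
    set w : ℂ := φ gen with hw
    have hwn : w ^ n = z := by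
      rw [hw, ← map_pow, ← hgenpow, hφ]
    have hwroot : aeval w (minpoly ℚ θ) = 0 := by
      rw [hw, Polynomial.aeval_algHom_apply, hgen]
      erw [IntermediateField.aeval_gen_minpoly, map_zero]
    rcases eq_or_ne w (θ : ℂ) with hwθ | hwθ
    · exfalso
      apply hzne
      rw [← hwn, hwθ]
      push_cast
      rfl
    · have := hconj w hwroot hwθ
      calc ‖z‖ = ‖w‖ ^ n := by rw [← hwn, norm_pow]
        _ ≤ 1 := pow_le_one₀ (norm_nonneg w) this
  · obtain ⟨φ, hφ⟩ :=
      IntermediateField.exists_algHom_adjoin_of_splits_of_aeval hK hmemθ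
        (x := θ) (y := z₀) hz₀
    refine ⟨z₀ ^ n, ?_, by rw [norm_pow, habs₀, one_pow]⟩
    have hφgen : φ gen = z₀ := hφ
    have : z₀ ^ n = φ (gen ^ n) := by rw [map_pow, hφgen]
    rw [this, Polynomial.aeval_algHom_apply, haevalq, map_zero]

/-- If some nonempty open subinterval of `(1, ∞)` contains no Salem number,
then the set of Salem numbers is bounded away from `1`. -/
theorem salem_bounded_away_of_gap
    (h : ∃ a b : ℝ, 1 < a ∧ a < b ∧ ∀ θ : ℝ, IsSalem θ → θ ∉ Set.Ioo a b) :
    ∃ c : ℝ, 1 < c ∧ ∀ θ : ℝ, IsSalem θ → c ≤ θ := by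
  obtain ⟨a, b, ha, hab, hgap⟩ := h
  have ha0 : 0 < a := lt_trans one_pos ha
  refine ⟨b / a, (one_lt_div ha0).mpr hab, ?_⟩
  intro θ hθ
  by_contra hc
  push_neg at hc
  have h1 : 1 < θ := hθ.1
  have hex : ∃ n : ℕ, a < θ ^ n := pow_unbounded_of_one_lt a h1
  set n := Nat.find hex with hn
  have hfound : a < θ ^ n := Nat.find_spec hex
  have hn1 : 1 ≤ n := by
    rcases Nat.eq_zero_or_pos n with h0 | h0
    · exfalso
      rw [h0, pow_zero] at hfound
      exact absurd hfound (not_lt.mpr (le_of_lt ha))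
    · exact h0
  have hprev : θ ^ (n - 1) ≤ a := by
    have := Nat.find_min hex (m := n - 1) (by omega)
    exact not_lt.mp this
  have hlt : θ ^ n < b := by
    have hθ0 : 0 < θ := lt_trans one_pos h1
    have : θ ^ n = θ ^ (n - 1) * θ := by
      rw [← pow_succ]
      congr 1
      omega
    rw [this]
    calc θ ^ (n - 1) * θ ≤ a * θ := mul_le_mul_of_nonneg_right hprev (le_of_lt hθ0)
      _ < a * (b / a) := by exact mul_lt_mul_of_pos_left hc ha0
      _ = b := by field_simp
  exact hgap (θ ^ n) (isSalem_pow hθ hn1) ⟨hfound, hlt⟩
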